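/- Let N ≥ 1 and let u₁ : ℝ^N → ℂ be measurable with ‖u₁‖_{1,1} := ∫_{ℝ^N} (1 + |x|)|u₁(x)| dx < ∞. Define A(ξ) = ∫_{ℝ^N} u₁(x)(cos(⟨x,ξ⟩) - 1) dx, B(ξ) = ∫_{ℝ^N} u₁(x) sin(⟨x,ξ⟩) dx, and F₁(ξ,t) = (4/π)(A(ξ) - iB(ξ)) e^{-t log(1+|ξ|²)/2} sin(πt/4). Then there exist a constant C > 0 depending only on N and T > 0 such that for all t ≥ T: ∫_{|ξ| < 1} |F₁(ξ,t)|² dξ ≤ C ‖u₁‖_{1,1}² t^{-(N+2)/2}. -/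

import Mathlib

open MeasureTheory

private lemma abs_cos_sub_one_le' (s : ℝ) : |Real.cos s - 1| ≤ |s| := by
  have h2 := Real.cos_two_mul (s / 2)
  have h3 := Real.sin_sq_add_cos_sq (s / 2)
  rw [show 2 * (s / 2) = s by ring] at h2
  have h1 : Real.cos s - 1 = -(2 * Real.sin (s / 2) ^ 2) := by nlinarith
  rw [h1, abs_neg]
  have h4 : |Real.sin (s / 2)| ≤ |s / 2| := Real.abs_sin_le_abs
  have h5 : |Real.sin (s / 2)| ≤ 1 := Real.abs_sin_le_one _
  have h6 : 0 ≤ |Real.sin (s / 2)| := abs_nonneg _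
  have : |2 * Real.sin (s / 2) ^ 2| = 2 * (|Real.sin (s / 2)| * |Real.sin (s / 2)|) := by
    rw [abs_mul, abs_pow, sq]
    simp
  rw [this]
  have : |s| = 2 * |s / 2| := by rw [abs_div]; simp; ring
  rw [this]
  nlinarith

/-- Low-frequency estimate for `F₁`. -/
theorem stmt_13 (N : ℕ) (hN : 1 ≤ N)
    (u₁ : EuclideanSpace ℝ (Fin N) → ℂ)
    (hmeas : AEStronglyMeasurable u₁ volume)
    (hint : Integrable (fun x : EuclideanSpace ℝ (Fin N) => (1 + ‖x‖) * ‖u₁ x‖)) :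
    ∃ C > (0 : ℝ), ∃ T > (0 : ℝ), ∀ t : ℝ, T ≤ t →
      (∫ ξ in Metric.ball (0 : EuclideanSpace ℝ (Fin N)) 1,
        ‖((4 / Real.pi : ℝ) : ℂ)
          * ((∫ x, u₁ x * ((Real.cos (inner ℝ x ξ) - 1 : ℝ) : ℂ))
              - Complex.I * (∫ x, u₁ x * ((Real.sin (inner ℝ x ξ) : ℝ) : ℂ)))
          * (Real.exp (-(t * Real.log (1 + ‖ξ‖ ^ 2)) / 2) : ℂ)
          * (Real.sin (Real.pi * t / 4) : ℂ)‖ ^ 2)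
      ≤ C * (∫ x : EuclideanSpace ℝ (Fin N), (1 + ‖x‖) * ‖u₁ x‖) ^ 2
          * t ^ (-((N : ℝ) + 2) / 2) := by
  have hπ := Real.pi_pos
  set M := ∫ x : EuclideanSpace ℝ (Fin N), (1 + ‖x‖) * ‖u₁ x‖ with hMdef
  have hM0 : 0 ≤ M := integral_nonneg fun x => by positivity
  clear_value M
  refine ⟨256 / Real.pi ^ 2 * (4 * Real.pi) ^ ((N : ℝ) / 2), by positivity, 1, one_pos,
    fun t ht => ?_⟩
  have ht0 : (0 : ℝ) < t := lt_of_lt_of_le one_pos ht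
  -- pointwise bound on the ball
  have key : ∀ ξ ∈ Metric.ball (0 : EuclideanSpace ℝ (Fin N)) 1,
      ‖((4 / Real.pi : ℝ) : ℂ)
          * ((∫ x, u₁ x * ((Real.cos (inner ℝ x ξ) - 1 : ℝ) : ℂ))
              - Complex.I * (∫ x, u₁ x * ((Real.sin (inner ℝ x ξ) : ℝ) : ℂ)))
          * (Real.exp (-(t * Real.log (1 + ‖ξ‖ ^ 2)) / 2) : ℂ)
          * (Real.sin (Real.pi * t / 4) : ℂ)‖ ^ 2
        ≤ 256 / Real.pi ^ 2 * M ^ 2 * t⁻¹ * Real.exp (-(t / 4) * ‖ξ‖ ^ 2) := by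
    intro ξ hξ
    have hξ1 : ‖ξ‖ < 1 := by simpa [dist_eq_norm] using hξ
    have hξ0 : (0 : ℝ) ≤ ‖ξ‖ := norm_nonneg _
    -- bound on A
    have hA : ‖∫ x, u₁ x * ((Real.cos (inner ℝ x ξ) - 1 : ℝ) : ℂ)‖ ≤ ‖ξ‖ * M := by
      calc ‖∫ x, u₁ x * ((Real.cos (inner ℝ x ξ) - 1 : ℝ) : ℂ)‖
          ≤ ∫ x, ‖u₁ x * ((Real.cos (inner ℝ x ξ) - 1 : ℝ) : ℂ)‖ :=
            norm_integral_le_integral_norm _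
        _ ≤ ∫ x : EuclideanSpace ℝ (Fin N), ‖ξ‖ * ((1 + ‖x‖) * ‖u₁ x‖) := by
            refine integral_mono_of_nonneg (Filter.Eventually.of_forall fun x => norm_nonneg _)
              (hint.const_mul ‖ξ‖) (Filter.Eventually.of_forall fun x => ?_)
            have h1 : |Real.cos (inner ℝ x ξ) - 1| ≤ ‖x‖ * ‖ξ‖ :=
              (abs_cos_sub_one_le' _).trans (abs_real_inner_le_norm x ξ)
            have : ‖u₁ x * ((Real.cos (inner ℝ x ξ) - 1 : ℝ) : ℂ)‖
                = ‖u₁ x‖ * |Real.cos (inner ℝ x ξ) - 1| := by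
              rw [norm_mul, Complex.norm_real, Real.norm_eq_abs]
            dsimp only
            rw [this]
            have h0 := norm_nonneg (u₁ x)
            have h0' := norm_nonneg x
            nlinarith
        _ = ‖ξ‖ * M := by rw [hMdef]; exact integral_const_mul _ _
    -- bound on B
    have hB : ‖∫ x, u₁ x * ((Real.sin (inner ℝ x ξ) : ℝ) : ℂ)‖ ≤ ‖ξ‖ * M := by
      calc ‖∫ x, u₁ x * ((Real.sin (inner ℝ x ξ) : ℝ) : ℂ)‖
          ≤ ∫ x, ‖u₁ x * ((Real.sin (inner ℝ x ξ) : ℝ) : ℂ)‖ :=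
            norm_integral_le_integral_norm _
        _ ≤ ∫ x : EuclideanSpace ℝ (Fin N), ‖ξ‖ * ((1 + ‖x‖) * ‖u₁ x‖) := by
            refine integral_mono_of_nonneg (Filter.Eventually.of_forall fun x => norm_nonneg _)
              (hint.const_mul ‖ξ‖) (Filter.Eventually.of_forall fun x => ?_)
            have h1 : |Real.sin (inner ℝ x ξ)| ≤ ‖x‖ * ‖ξ‖ :=
              Real.abs_sin_le_abs.trans (abs_real_inner_le_norm x ξ)
            have : ‖u₁ x * ((Real.sin (inner ℝ x ξ) : ℝ) : ℂ)‖
                = ‖u₁ x‖ * |Real.sin (inner ℝ x ξ)| := by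
              rw [norm_mul, Complex.norm_real, Real.norm_eq_abs]
            dsimp only
            rw [this]
            have h0 := norm_nonneg (u₁ x)
            have h0' := norm_nonneg x
            nlinarith
        _ = ‖ξ‖ * M := by rw [hMdef]; exact integral_const_mul _ _
    have hAB : ‖(∫ x, u₁ x * ((Real.cos (inner ℝ x ξ) - 1 : ℝ) : ℂ))
        - Complex.I * (∫ x, u₁ x * ((Real.sin (inner ℝ x ξ) : ℝ) : ℂ))‖ ≤ 2 * (‖ξ‖ * M) := by
      calc ‖(∫ x, u₁ x * ((Real.cos (inner ℝ x ξ) - 1 : ℝ) : ℂ))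
            - Complex.I * (∫ x, u₁ x * ((Real.sin (inner ℝ x ξ) : ℝ) : ℂ))‖
          ≤ ‖∫ x, u₁ x * ((Real.cos (inner ℝ x ξ) - 1 : ℝ) : ℂ)‖
            + ‖Complex.I * (∫ x, u₁ x * ((Real.sin (inner ℝ x ξ) : ℝ) : ℂ))‖ := norm_sub_le _ _
        _ = ‖∫ x, u₁ x * ((Real.cos (inner ℝ x ξ) - 1 : ℝ) : ℂ)‖
            + ‖∫ x, u₁ x * ((Real.sin (inner ℝ x ξ) : ℝ) : ℂ)‖ := by
            rw [norm_mul, Complex.norm_I, one_mul]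
        _ ≤ 2 * (‖ξ‖ * M) := by linarith
    -- norm of the full expression
    have hnorm : ‖((4 / Real.pi : ℝ) : ℂ)
          * ((∫ x, u₁ x * ((Real.cos (inner ℝ x ξ) - 1 : ℝ) : ℂ))
              - Complex.I * (∫ x, u₁ x * ((Real.sin (inner ℝ x ξ) : ℝ) : ℂ)))
          * (Real.exp (-(t * Real.log (1 + ‖ξ‖ ^ 2)) / 2) : ℂ)
          * (Real.sin (Real.pi * t / 4) : ℂ)‖
        ≤ (4 / Real.pi) * (2 * (‖ξ‖ * M)) * Real.exp (-(t * Real.log (1 + ‖ξ‖ ^ 2)) / 2) := by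
      rw [norm_mul, norm_mul, norm_mul, Complex.norm_real, Complex.norm_real, Complex.norm_real,
        Real.norm_eq_abs, Real.norm_eq_abs, Real.norm_eq_abs]
      have e1 : |4 / Real.pi| = 4 / Real.pi := abs_of_pos (by positivity)
      have e2 : |Real.exp (-(t * Real.log (1 + ‖ξ‖ ^ 2)) / 2)|
          = Real.exp (-(t * Real.log (1 + ‖ξ‖ ^ 2)) / 2) := abs_of_pos (Real.exp_pos _)
      have e3 : |Real.sin (Real.pi * t / 4)| ≤ 1 := Real.abs_sin_le_one _
      rw [e1, e2]
      have hexp := (Real.exp_pos (-(t * Real.log (1 + ‖ξ‖ ^ 2)) / 2)).le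
      have h0 : (0 : ℝ) ≤ 4 / Real.pi := by positivity
      calc 4 / Real.pi * ‖_ - _‖ * Real.exp (-(t * Real.log (1 + ‖ξ‖ ^ 2)) / 2)
              * |Real.sin (Real.pi * t / 4)|
          ≤ 4 / Real.pi * ‖_ - _‖ * Real.exp (-(t * Real.log (1 + ‖ξ‖ ^ 2)) / 2) * 1 := by
            gcongr
        _ = 4 / Real.pi * ‖_ - _‖ * Real.exp (-(t * Real.log (1 + ‖ξ‖ ^ 2)) / 2) := mul_one _
        _ ≤ 4 / Real.pi * (2 * (‖ξ‖ * M)) * Real.exp (-(t * Real.log (1 + ‖ξ‖ ^ 2)) / 2) := by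
            gcongr
    -- log lower bound
    have hlog : ‖ξ‖ ^ 2 / 2 ≤ Real.log (1 + ‖ξ‖ ^ 2) := by
      set s := ‖ξ‖ ^ 2 with hs
      have hs0 : (0 : ℝ) ≤ s := by positivity
      have hs1 : s < 1 := by nlinarith
      rw [Real.le_log_iff_exp_le (by linarith)]
      have e1 : 1 - s / 2 ≤ Real.exp (-(s / 2)) := by
        have := Real.add_one_le_exp (-(s / 2)); linarith
      have e2 : Real.exp (-(s / 2)) * Real.exp (s / 2) = 1 := by
        rw [← Real.exp_add]; simp
      have e3 : (1 - s / 2) * Real.exp (s / 2) ≤ 1 := by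
        calc (1 - s / 2) * Real.exp (s / 2) ≤ Real.exp (-(s / 2)) * Real.exp (s / 2) := by
              exact mul_le_mul_of_nonneg_right e1 (Real.exp_pos _).le
          _ = 1 := e2
      nlinarith [Real.exp_pos (s / 2)]
    have hE1 : Real.exp (-(t * Real.log (1 + ‖ξ‖ ^ 2))) ≤ Real.exp (-(t * (‖ξ‖ ^ 2 / 2))) := by
      apply Real.exp_le_exp.2
      have := mul_le_mul_of_nonneg_left hlog ht0.le
      linarith
    -- moment bound
    have hE2 : ‖ξ‖ ^ 2 * Real.exp (-(t * (‖ξ‖ ^ 2 / 2))) ≤ (4 / t) * Real.exp (-(t / 4) * ‖ξ‖ ^ 2) := by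
      set s := t / 4 * ‖ξ‖ ^ 2 with hsd
      have hs0 : (0 : ℝ) ≤ s := by positivity
      have h1 : s ≤ Real.exp s := by have := Real.add_one_le_exp s; linarith
      have h2 : s * Real.exp (-s) ≤ 1 := by
        calc s * Real.exp (-s) ≤ Real.exp s * Real.exp (-s) :=
              mul_le_mul_of_nonneg_right h1 (Real.exp_pos _).le
          _ = 1 := by rw [← Real.exp_add]; simp
      have h3 : Real.exp (-(t * (‖ξ‖ ^ 2 / 2))) = Real.exp (-s) * Real.exp (-s) := by
        rw [← Real.exp_add]; congr 1; rw [hsd]; ring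
      have h4 : ‖ξ‖ ^ 2 = (4 / t) * s := by rw [hsd]; field_simp
      rw [h3, show -(t / 4) * ‖ξ‖ ^ 2 = -s by rw [hsd]; ring, h4]
      have h5 : (0 : ℝ) ≤ Real.exp (-s) := (Real.exp_pos _).le
      calc 4 / t * s * (Real.exp (-s) * Real.exp (-s))
          = (4 / t) * ((s * Real.exp (-s)) * Real.exp (-s)) := by ring
        _ ≤ (4 / t) * (1 * Real.exp (-s)) := by
            apply mul_le_mul_of_nonneg_left _ (by positivity)
            exact mul_le_mul_of_nonneg_right h2 h5
        _ = 4 / t * Real.exp (-s) := by ring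
    -- combine
    have hnn : (0 : ℝ) ≤ (4 / Real.pi) * (2 * (‖ξ‖ * M)) * Real.exp (-(t * Real.log (1 + ‖ξ‖ ^ 2)) / 2) := by
      positivity
    calc ‖((4 / Real.pi : ℝ) : ℂ)
          * ((∫ x, u₁ x * ((Real.cos (inner ℝ x ξ) - 1 : ℝ) : ℂ))
              - Complex.I * (∫ x, u₁ x * ((Real.sin (inner ℝ x ξ) : ℝ) : ℂ)))
          * (Real.exp (-(t * Real.log (1 + ‖ξ‖ ^ 2)) / 2) : ℂ)
          * (Real.sin (Real.pi * t / 4) : ℂ)‖ ^ 2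
        ≤ ((4 / Real.pi) * (2 * (‖ξ‖ * M)) * Real.exp (-(t * Real.log (1 + ‖ξ‖ ^ 2)) / 2)) ^ 2 := by
          exact pow_le_pow_left₀ (norm_nonneg _) hnorm 2
      _ = 64 / Real.pi ^ 2 * M ^ 2 * (‖ξ‖ ^ 2 * Real.exp (-(t * Real.log (1 + ‖ξ‖ ^ 2)))) := by
          have h2 : Real.exp (-(t * Real.log (1 + ‖ξ‖ ^ 2)) / 2)
                * Real.exp (-(t * Real.log (1 + ‖ξ‖ ^ 2)) / 2)
              = Real.exp (-(t * Real.log (1 + ‖ξ‖ ^ 2))) := by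
            rw [← Real.exp_add]; congr 1; ring
          rw [← h2]; ring
      _ ≤ 64 / Real.pi ^ 2 * M ^ 2 * (‖ξ‖ ^ 2 * Real.exp (-(t * (‖ξ‖ ^ 2 / 2)))) := by
          have : ‖ξ‖ ^ 2 * Real.exp (-(t * Real.log (1 + ‖ξ‖ ^ 2)))
              ≤ ‖ξ‖ ^ 2 * Real.exp (-(t * (‖ξ‖ ^ 2 / 2))) :=
            mul_le_mul_of_nonneg_left hE1 (by positivity)
          exact mul_le_mul_of_nonneg_left this (by positivity)
      _ ≤ 64 / Real.pi ^ 2 * M ^ 2 * ((4 / t) * Real.exp (-(t / 4) * ‖ξ‖ ^ 2)) :=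
          mul_le_mul_of_nonneg_left hE2 (by positivity)
      _ = 256 / Real.pi ^ 2 * M ^ 2 * t⁻¹ * Real.exp (-(t / 4) * ‖ξ‖ ^ 2) := by
          field_simp
          ring
  -- Gaussian integral
  have htq : (0 : ℝ) < t / 4 := by linarith
  have hg : Integrable (fun ξ : EuclideanSpace ℝ (Fin N) => Real.exp (-(t / 4) * ‖ξ‖ ^ 2)) := by
    have h1 := GaussianFourier.integrable_cexp_neg_mul_sq_norm_add
      (V := EuclideanSpace ℝ (Fin N)) (b := ((t / 4 : ℝ) : ℂ)) (by simpa using htq) 0 0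
    have h2 := h1.norm
    refine h2.congr (Filter.Eventually.of_forall fun v => ?_)
    simp
    rw [Complex.norm_exp]; congr 1
    norm_cast
    rw [show (-(↑t / 4 * ↑(‖v‖ ^ 2)) : ℂ) = ((-(t / 4 * ‖v‖ ^ 2) : ℝ) : ℂ) by push_cast; ring,
      Complex.ofReal_re]
  have hval : (∫ ξ : EuclideanSpace ℝ (Fin N), Real.exp (-(t / 4) * ‖ξ‖ ^ 2))
      = (Real.pi / (t / 4)) ^ ((N : ℝ) / 2) := by
    have h := GaussianFourier.integral_rexp_neg_mul_sq_norm (V := EuclideanSpace ℝ (Fin N)) htq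
    simpa [finrank_euclideanSpace_fin] using h
  calc (∫ ξ in Metric.ball (0 : EuclideanSpace ℝ (Fin N)) 1,
        ‖((4 / Real.pi : ℝ) : ℂ)
          * ((∫ x, u₁ x * ((Real.cos (inner ℝ x ξ) - 1 : ℝ) : ℂ))
              - Complex.I * (∫ x, u₁ x * ((Real.sin (inner ℝ x ξ) : ℝ) : ℂ)))
          * (Real.exp (-(t * Real.log (1 + ‖ξ‖ ^ 2)) / 2) : ℂ)
          * (Real.sin (Real.pi * t / 4) : ℂ)‖ ^ 2)
      ≤ ∫ ξ in Metric.ball (0 : EuclideanSpace ℝ (Fin N)) 1,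
          256 / Real.pi ^ 2 * M ^ 2 * t⁻¹ * Real.exp (-(t / 4) * ‖ξ‖ ^ 2) := by
        refine integral_mono_of_nonneg (Filter.Eventually.of_forall fun ξ => by positivity)
          ((hg.const_mul _).restrict) ?_
        filter_upwards [ae_restrict_mem measurableSet_ball] with ξ hξ using key ξ hξ
    _ = 256 / Real.pi ^ 2 * M ^ 2 * t⁻¹
          * ∫ ξ in Metric.ball (0 : EuclideanSpace ℝ (Fin N)) 1, Real.exp (-(t / 4) * ‖ξ‖ ^ 2) :=
        integral_const_mul _ _
    _ ≤ 256 / Real.pi ^ 2 * M ^ 2 * t⁻¹ * ∫ ξ : EuclideanSpace ℝ (Fin N), Real.exp (-(t / 4) * ‖ξ‖ ^ 2) := by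
        apply mul_le_mul_of_nonneg_left _ (by positivity)
        exact setIntegral_le_integral hg (Filter.Eventually.of_forall fun ξ => (Real.exp_pos _).le)
    _ = 256 / Real.pi ^ 2 * M ^ 2 * t⁻¹ * (Real.pi / (t / 4)) ^ ((N : ℝ) / 2) := by rw [hval]
    _ ≤ 256 / Real.pi ^ 2 * (4 * Real.pi) ^ ((N : ℝ) / 2) * M ^ 2 * t ^ (-((N : ℝ) + 2) / 2) := by
        have h1 : Real.pi / (t / 4) = 4 * Real.pi / t := by field_simp
        have h2 : (4 * Real.pi / t) ^ ((N : ℝ) / 2)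
            = (4 * Real.pi) ^ ((N : ℝ) / 2) / t ^ ((N : ℝ) / 2) :=
          Real.div_rpow (by positivity) ht0.le _
        have h3 : t ^ (-((N : ℝ) + 2) / 2) = t⁻¹ * (t ^ ((N : ℝ) / 2))⁻¹ := by
          rw [show (-((N : ℝ) + 2) / 2) = (-1) + (-((N : ℝ) / 2)) by ring,
            Real.rpow_add ht0, Real.rpow_neg_one, Real.rpow_neg ht0.le]
        rw [h1, h2, h3]
        have h4 : (0 : ℝ) < t ^ ((N : ℝ) / 2) := Real.rpow_pos_of_pos ht0 _
        rw [div_eq_mul_inv]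
        ring_nf
        exact le_rfl
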